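/- arXiv:1212.1251 — 2 statements merged into one kernel-verified Lean document; each statement's English description precedes it below -/
import Mathlib

section
/- For every finite DTMDP with uniformisation rate q > 0, time bound t ≥ 0, reward structure (c, f) and every initial state s0, the supremum of V(σ, s0) over all history-dependent randomised (HR) schedulers σ equals the supremum of V(σ', s0) over all counting randomised (CR) schedulers σ'. -/
open scoped BigOperators

namespace TR

variable {S A : Type} [Fintype S] [Fintype A] [DecidableEq S] [DecidableEq A]

/-- Poisson probabilities `φ_λ(i) = λ^i/i! · e^{−λ}`. -/
noncomputable def phi (lam : ℝ) (i : ℕ) : ℝ :=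
  lam ^ i / (Nat.factorial i : ℝ) * Real.exp (-lam)

/-- `ψ_λ(i) = 1 − Σ_{j=0}^{i} φ_λ(j)`. -/
noncomputable def psi (lam : ℝ) (i : ℕ) : ℝ :=
  1 - ∑ j ∈ Finset.range (i + 1), phi lam j

/-- Action `a` is enabled in state `s`. -/
def Enabled (P : S → A → S → ℝ) (s : S) (a : A) : Prop :=
  ∑ s', P s a s' = 1

/-- `P` is the transition function of a finite DTMDP. -/
def IsDTMDP (P : S → A → S → ℝ) : Prop :=
  (∀ s a s', 0 ≤ P s a s') ∧
  (∀ s a, (∑ s', P s a s') = 0 ∨ (∑ s', P s a s') = 1) ∧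
  (∀ s, ∃ a, Enabled P s a)

/-- History-dependent randomised scheduler.  A history is encoded as a pair of
a list of (state, action) pairs (most recent first) and the current state. -/
def IsHR (P : S → A → S → ℝ) (sch : List (S × A) × S → A → ℝ) : Prop :=
  (∀ h a, 0 ≤ sch h a) ∧ (∀ h, ∑ a, sch h a = 1) ∧
  (∀ h a, 0 < sch h a → Enabled P h.2 a)

/-- Probability of the path recorded in the given history (of length `n`,
starting at `s0`) under the HR scheduler `sch`. -/
noncomputable def hrHistProb (P : S → A → S → ℝ) (sch : List (S × A) × S → A → ℝ)
    (s0 : S) : ℕ → List (S × A) × S → ℝ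
  | 0, h => if h.1 = [] ∧ h.2 = s0 then 1 else 0
  | _ + 1, ([], _) => 0
  | n + 1, ((s, a) :: rest, s') =>
      hrHistProb P sch s0 n (rest, s) * sch (rest, s) a * P s a s'

/-- Transient probability `tprob^σ(s0, n, s)`: total probability of all paths of
length `n` from `s0` ending in `s`. -/
noncomputable def hrProb (P : S → A → S → ℝ) (sch : List (S × A) × S → A → ℝ)
    (s0 : S) (n : ℕ) (s : S) : ℝ :=
  ∑' l : List (S × A), hrHistProb P sch s0 n (l, s)

/-- Counting randomised scheduler. -/
def IsCR (P : S → A → S → ℝ) (sch : S → ℕ → A → ℝ) : Prop :=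
  (∀ s n a, 0 ≤ sch s n a) ∧ (∀ s n, ∑ a, sch s n a = 1) ∧
  (∀ s n a, 0 < sch s n a → Enabled P s a)

/-- Transient distribution of a CR scheduler. -/
noncomputable def crProb (P : S → A → S → ℝ) (sch : S → ℕ → A → ℝ) (s0 : S) :
    ℕ → S → ℝ
  | 0 => fun s => if s = s0 then 1 else 0
  | n + 1 => fun s' => ∑ s, crProb P sch s0 n s * ∑ a, sch s n a * P s a s'

/-- Counting deterministic scheduler. -/
def IsCD (P : S → A → S → ℝ) (d : S → ℕ → A) : Prop :=
  ∀ s n, Enabled P s (d s n)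

/-- Transient distribution of a CD scheduler. -/
noncomputable def cdProb (P : S → A → S → ℝ) (d : S → ℕ → A) (s0 : S) :
    ℕ → S → ℝ
  | 0 => fun s => if s = s0 then 1 else 0
  | n + 1 => fun s' => ∑ s, cdProb P d s0 n s * P s (d s n) s'

/-- The value `V = Σ_i [ φ_{qt}(i)·Σ_s p_i(s)·f(s) + ψ_{qt}(i)·Σ_s p_i(s)·c(s)/q ]`
of transient distributions `p` w.r.t. uniformisation rate `q`, time bound `t`
and rewards `(c, f)`. -/
noncomputable def value (q t : ℝ) (c f : S → ℝ) (p : ℕ → S → ℝ) : ℝ :=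
  ∑' i : ℕ, (phi (q * t) i * ∑ s, p i s * f s
    + psi (q * t) i * ∑ s, p i s * (c s / q))

/-- Value-iteration vectors of a CR scheduler: `crVI … k j` is `q_{k+1-j}`,
i.e. `crVI … k 0 = q_{k+1} ≡ 0` and `crVI … k (k+1) = q_0`. -/
noncomputable def crVI (P : S → A → S → ℝ) (sch : S → ℕ → A → ℝ)
    (q t : ℝ) (c f : S → ℝ) (k : ℕ) : ℕ → S → ℝ
  | 0 => fun _ => 0
  | j + 1 => fun s =>
      (∑ a, sch s (k - j) a * ∑ s', P s a s' * crVI P sch q t c f k j s')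
      + phi (q * t) (k - j) * f s + psi (q * t) (k - j) * (c s / q)

/-- Maximising value-iteration vectors: `maxVI … k j` is `q'_{k+1-j}`,
i.e. `maxVI … k 0 = q'_{k+1} ≡ 0` and `maxVI … k (k+1) = q'_0`. -/
noncomputable def maxVI (P : S → A → S → ℝ)
    (q t : ℝ) (c f : S → ℝ) (k : ℕ) : ℕ → S → ℝ
  | 0 => fun _ => 0
  | j + 1 => fun s =>
      sSup {x : ℝ | ∃ a, Enabled P s a ∧
        x = ∑ s', P s a s' * maxVI P q t c f k j s'}
      + phi (q * t) (k - j) * f s + psi (q * t) (k - j) * (c s / q)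

/-- Maximum of a real-valued function on a finite nonempty type. -/
noncomputable def maxOf [Nonempty S] (g : S → ℝ) : ℝ :=
  Finset.univ.sup' Finset.univ_nonempty g

/-- `k` is `ε`-sufficient: `Σ_{n=0}^{k} ψ_{qt}(n) > qt − ε·q/(2·max_s c(s))`
(dropped if `max_s c(s) = 0`) and `ψ_{qt}(k)·max_s f(s) < ε/2`. -/
def EpsSufficient [Nonempty S] (q t : ℝ) (c f : S → ℝ) (ε : ℝ) (k : ℕ) : Prop :=
  (maxOf c = 0 ∨
    (∑ n ∈ Finset.range (k + 1), psi (q * t) n) > q * t - ε * q / (2 * maxOf c)) ∧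
  psi (q * t) k * maxOf f < ε / 2

/-- `n`-step transition probabilities (matrix powers) of a stochastic matrix. -/
noncomputable def matPow (P : S → S → ℝ) : ℕ → S → S → ℝ
  | 0 => fun s s' => if s = s' then 1 else 0
  | n + 1 => fun s s' => ∑ s'', matPow P n s s'' * P s'' s'

/-- `part` is a partition of the finite state set `S`. -/
def IsPartition (part : Finset (Finset S)) : Prop :=
  (∀ z ∈ part, z.Nonempty) ∧ (∀ s : S, ∃ z ∈ part, s ∈ z) ∧
  (∀ z ∈ part, ∀ z' ∈ part, z ≠ z' → Disjoint z z')

/-- Abstraction DTMDP of a stochastic matrix w.r.t. a partition: states are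
blocks, actions are concrete states, `P̄(z, s, z') = Σ_{s' ∈ z'} P(s,s')` if
`s ∈ z` and `0` otherwise. -/
noncomputable def abst (P : S → S → ℝ) (part : Finset (Finset S)) :
    {z // z ∈ part} → S → {z // z ∈ part} → ℝ :=
  fun z s z' => if s ∈ z.1 then ∑ s' ∈ z'.1, P s s' else 0


section Aux

variable (S A) in
/-- The finset of lists of (state, action) pairs of length `n`. -/
def listsLen : ℕ → Finset (List (S × A))
  | 0 => {[]}
  | n + 1 => (Finset.univ ×ˢ listsLen n).image fun p => p.1 :: p.2

lemma length_of_mem_listsLen : ∀ {n : ℕ} {l : List (S × A)},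
    l ∈ listsLen S A n → l.length = n
  | 0, l, hl => by simpa [listsLen] using hl
  | n + 1, l, hl => by
    simp only [listsLen, Finset.mem_image, Finset.mem_product] at hl
    obtain ⟨⟨p, rest⟩, ⟨-, hrest⟩, rfl⟩ := hl
    simp [length_of_mem_listsLen hrest]

lemma hrHistProb_eq_zero (P : S → A → S → ℝ) (sch : List (S × A) × S → A → ℝ)
    (s0 : S) : ∀ (n : ℕ) (l : List (S × A)) (s : S),
      l ∉ listsLen S A n → hrHistProb P sch s0 n (l, s) = 0
  | 0, l, s, hl => by
    have : l ≠ [] := by rintro rfl; simp [listsLen] at hl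
    simp [hrHistProb, this]
  | n + 1, [], s, _ => by simp [hrHistProb]
  | n + 1, (s1, a) :: rest, s, hl => by
    have hrest : rest ∉ listsLen S A n := by
      intro h
      exact hl (by
        simp only [listsLen, Finset.mem_image, Finset.mem_product]
        exact ⟨((s1, a), rest), ⟨Finset.mem_univ _, h⟩, rfl⟩)
    simp [hrHistProb, hrHistProb_eq_zero P sch s0 n rest s1 hrest]

lemma hrProb_eq_sum (P : S → A → S → ℝ) (sch : List (S × A) × S → A → ℝ)
    (s0 : S) (n : ℕ) (s : S) :
    hrProb P sch s0 n s = ∑ l ∈ listsLen S A n, hrHistProb P sch s0 n (l, s) :=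
  tsum_eq_sum fun l hl => hrHistProb_eq_zero P sch s0 n l s hl

lemma hrHistProb_nonneg (P : S → A → S → ℝ) (sch : List (S × A) × S → A → ℝ)
    (s0 : S) (hP : ∀ s a s', 0 ≤ P s a s') (hsch : ∀ h a, 0 ≤ sch h a) :
    ∀ (n : ℕ) (l : List (S × A)) (s : S), 0 ≤ hrHistProb P sch s0 n (l, s)
  | 0, l, s => by simp only [hrHistProb]; positivity
  | n + 1, [], s => by simp [hrHistProb]
  | n + 1, (s1, a) :: rest, s => by
    simp only [hrHistProb]
    exact mul_nonneg (mul_nonneg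
      (hrHistProb_nonneg P sch s0 hP hsch n rest s1) (hsch _ _)) (hP _ _ _)

lemma hrProb_zero (P : S → A → S → ℝ) (sch : List (S × A) × S → A → ℝ)
    (s0 : S) (s : S) : hrProb P sch s0 0 s = if s = s0 then 1 else 0 := by
  rw [hrProb_eq_sum, show listsLen S A 0 = {[]} from rfl, Finset.sum_singleton]
  simp [hrHistProb]

/-- Joint probability of being in `s` after `n` steps and then choosing `a`. -/
noncomputable def hrJoint (P : S → A → S → ℝ) (sch : List (S × A) × S → A → ℝ)
    (s0 : S) (n : ℕ) (s : S) (a : A) : ℝ :=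
  ∑ l ∈ listsLen S A n, hrHistProb P sch s0 n (l, s) * sch (l, s) a

lemma hrProb_succ (P : S → A → S → ℝ) (sch : List (S × A) × S → A → ℝ)
    (s0 : S) (n : ℕ) (s' : S) :
    hrProb P sch s0 (n + 1) s'
      = ∑ s, ∑ a, hrJoint P sch s0 n s a * P s a s' := by
  rw [hrProb_eq_sum]
  have hinj : Set.InjOn (fun p : (S × A) × List (S × A) => p.1 :: p.2)
      (((Finset.univ ×ˢ listsLen S A n : Finset ((S × A) × List (S × A))) : Set _)) := by
    rintro ⟨p, l⟩ - ⟨p', l'⟩ - h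
    simp only [List.cons.injEq] at h
    simp [h.1, h.2]
  rw [show listsLen S A (n + 1)
      = (Finset.univ ×ˢ listsLen S A n).image (fun p => p.1 :: p.2) from rfl,
    Finset.sum_image hinj]
  rw [Finset.sum_product]
  rw [Fintype.sum_prod_type]
  unfold hrJoint
  refine Finset.sum_congr rfl fun s _ => Finset.sum_congr rfl fun a _ => ?_
  rw [Finset.sum_mul]
  exact Finset.sum_congr rfl fun l _ => by simp [hrHistProb]

lemma sum_hrJoint (P : S → A → S → ℝ) (sch : List (S × A) × S → A → ℝ)
    (s0 : S) (hsch : ∀ h, ∑ a, sch h a = 1) (n : ℕ) (s : S) :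
    ∑ a, hrJoint P sch s0 n s a = hrProb P sch s0 n s := by
  unfold hrJoint
  rw [hrProb_eq_sum, Finset.sum_comm]
  exact Finset.sum_congr rfl fun l _ => by
    rw [← Finset.mul_sum, hsch, mul_one]

lemma hrJoint_nonneg (P : S → A → S → ℝ) (sch : List (S × A) × S → A → ℝ)
    (s0 : S) (hP : ∀ s a s', 0 ≤ P s a s') (hsch : ∀ h a, 0 ≤ sch h a)
    (n : ℕ) (s : S) (a : A) : 0 ≤ hrJoint P sch s0 n s a :=
  Finset.sum_nonneg fun l _ =>
    mul_nonneg (hrHistProb_nonneg P sch s0 hP hsch n l s) (hsch _ _)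

/-- A CR scheduler induces an HR scheduler with the same transient
probabilities. -/
lemma cr_to_hr (P : S → A → S → ℝ) (sch' : S → ℕ → A → ℝ) (hcr : IsCR P sch')
    (s0 : S) :
    ∃ sch : List (S × A) × S → A → ℝ, IsHR P sch ∧
      ∀ n s, hrProb P sch s0 n s = crProb P sch' s0 n s := by
  refine ⟨fun h a => sch' h.2 h.1.length a,
    ⟨fun h a => hcr.1 _ _ _, fun h => hcr.2.1 _ _,
     fun h a hpos => hcr.2.2 _ _ _ hpos⟩, ?_⟩
  intro n
  induction n with
  | zero => intro s; rw [hrProb_zero]; simp [crProb]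
  | succ n ih =>
    intro s'
    rw [hrProb_succ]
    have hjoint : ∀ s a, hrJoint P (fun h a => sch' h.2 h.1.length a) s0 n s a
        = crProb P sch' s0 n s * sch' s n a := by
      intro s a
      unfold hrJoint
      rw [← ih s, hrProb_eq_sum, Finset.sum_mul]
      exact Finset.sum_congr rfl fun l hl => by
        simp [length_of_mem_listsLen hl]
    simp only [crProb, hjoint]
    exact Finset.sum_congr rfl fun s _ => by
      rw [Finset.mul_sum]
      exact Finset.sum_congr rfl fun a _ => by ring

/-- An HR scheduler induces a CR scheduler with the same transient
probabilities. -/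
lemma hr_to_cr (P : S → A → S → ℝ) (hP : IsDTMDP P)
    (sch : List (S × A) × S → A → ℝ) (hhr : IsHR P sch) (s0 : S) :
    ∃ sch' : S → ℕ → A → ℝ, IsCR P sch' ∧
      ∀ n s, crProb P sch' s0 n s = hrProb P sch s0 n s := by
  classical
  set J := hrJoint P sch s0 with hJ
  set p := hrProb P sch s0 with hp
  have hJnn : ∀ n s a, 0 ≤ J n s a := fun n s a =>
    hrJoint_nonneg P sch s0 hP.1 hhr.1 n s a
  have hsumJ : ∀ n s, ∑ a, J n s a = p n s := fun n s =>
    sum_hrJoint P sch s0 hhr.2.1 n s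
  have hpnn : ∀ n s, 0 ≤ p n s := fun n s => by
    rw [← hsumJ]; exact Finset.sum_nonneg fun a _ => hJnn n s a
  refine ⟨fun s n a => if p n s = 0 then
      (if a = Classical.choose (hP.2.2 s) then 1 else 0)
    else J n s a / p n s, ⟨?_, ?_, ?_⟩, ?_⟩
  · intro s n a
    dsimp only
    by_cases hps : p n s = 0
    · rw [if_pos hps]
      split <;> norm_num
    · rw [if_neg hps]
      exact div_nonneg (hJnn n s a) (hpnn n s)
  · intro s n
    dsimp only
    by_cases hps : p n s = 0
    · simp only [if_pos hps]
      simp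
    · simp only [if_neg hps]
      rw [← Finset.sum_div, hsumJ, div_self hps]
  · intro s n a hpos
    dsimp only at hpos
    by_cases hps : p n s = 0
    · rw [if_pos hps] at hpos
      rcases eq_or_ne a (Classical.choose (hP.2.2 s)) with rfl | hne
      · exact Classical.choose_spec (hP.2.2 s)
      · simp [hne] at hpos
    · rw [if_neg hps] at hpos
      have hJpos : 0 < J n s a := by
        by_contra hle
        push_neg at hle
        have h0 : J n s a = 0 := le_antisymm hle (hJnn n s a)
        rw [h0, zero_div] at hpos
        exact lt_irrefl _ hpos
      obtain ⟨l, -, hl⟩ := Finset.exists_lt_of_sum_lt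
        (f := fun _ : List (S × A) => (0:ℝ)) (by simpa [hJ, hrJoint] using hJpos)
      have hschpos : 0 < sch (l, s) a := by
        rcases lt_or_ge 0 (sch (l, s) a) with h | h
        · exact h
        · exfalso
          have h0 : sch (l, s) a = 0 := le_antisymm h (hhr.1 _ _)
          rw [h0, mul_zero] at hl
          exact lt_irrefl _ hl
      exact hhr.2.2 (l, s) a hschpos
  · intro n
    induction n with
    | zero =>
      intro s
      rw [hp, hrProb_zero]
      simp [crProb]
    | succ n ih =>
      intro s'
      rw [hp, hrProb_succ, ← hJ, ← hp]
      simp only [crProb]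
      refine Finset.sum_congr rfl fun s _ => ?_
      rw [ih s]
      by_cases hps : p n s = 0
      · have hJ0 : ∀ a, J n s a = 0 := by
          intro a
          have h := hsumJ n s
          rw [hps] at h
          exact (Finset.sum_eq_zero_iff_of_nonneg fun a _ => hJnn n s a).mp h a
            (Finset.mem_univ a)
        simp [hps, hJ0]
      · simp only [if_neg hps]
        rw [Finset.mul_sum]
        refine Finset.sum_congr rfl fun a _ => ?_
        field_simp

end Aux

/-- the supremum of the value over HR schedulers equals the
supremum over CR schedulers. -/
theorem stmt7 {S A : Type} [Fintype S] [Fintype A] [DecidableEq S] [DecidableEq A]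
    (P : S → A → S → ℝ) (hP : IsDTMDP P)
    (q t : ℝ) (hq : 0 < q) (ht : 0 ≤ t)
    (c f : S → ℝ) (hc : ∀ s, 0 ≤ c s) (hf : ∀ s, 0 ≤ f s) (s0 : S) :
    (⨆ sch : {sch : List (S × A) × S → A → ℝ // IsHR P sch},
      value q t c f (hrProb P sch.1 s0)) =
    ⨆ sch' : {sch' : S → ℕ → A → ℝ // IsCR P sch'},
      value q t c f (crProb P sch'.1 s0) := by
  have hrange : Set.range (fun sch : {sch : List (S × A) × S → A → ℝ // IsHR P sch} =>
      value q t c f (hrProb P sch.1 s0))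
      = Set.range (fun sch' : {sch' : S → ℕ → A → ℝ // IsCR P sch'} =>
      value q t c f (crProb P sch'.1 s0)) := by
    apply Set.Subset.antisymm
    · rintro x ⟨⟨sch, hsch⟩, rfl⟩
      obtain ⟨sch', hcr, heq⟩ := hr_to_cr P hP sch hsch s0
      refine ⟨⟨sch', hcr⟩, ?_⟩
      simp only
      congr 1
      funext n s
      exact heq n s
    · rintro x ⟨⟨sch', hcr⟩, rfl⟩
      obtain ⟨sch, hsch, heq⟩ := cr_to_hr P sch' hcr s0
      refine ⟨⟨sch, hsch⟩, ?_⟩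
      simp only
      congr 1
      funext n s
      exact heq n s
  rw [iSup, iSup, hrange]

end TR
end

section
/- Let a finite DTMDP with uniformisation rate q > 0, time bound t ≥ 0, reward structure (c, f) and precision ε > 0 be given, and let k ∈ ℕ be ε-sufficient. Then the maximising value-iteration vector q'_0 satisfies, for every state s0, |q'_0(s0) − sup_{σ ∈ CR} V(σ, s0)| < ε, the supremum being over all counting randomised (CR) schedulers. -/
open scoped BigOperators

namespace TR

variable {S A : Type} [Fintype S] [Fintype A] [DecidableEq S] [DecidableEq A]

lemma phi_nonneg {lam : ℝ} (hl : 0 ≤ lam) (i : ℕ) : 0 ≤ phi lam i := by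
  unfold phi; positivity

lemma summable_phi (lam : ℝ) : Summable (phi lam) :=
  (Real.summable_pow_div_factorial lam).mul_right _

lemma tsum_phi (lam : ℝ) : ∑' i, phi lam i = 1 := by
  unfold phi
  rw [tsum_mul_right]
  have h1 : ∑' i : ℕ, lam ^ i / (Nat.factorial i : ℝ) = Real.exp lam := by
    rw [Real.exp_eq_exp_ℝ, NormedSpace.exp_eq_tsum_div]
  rw [h1, ← Real.exp_add]
  simp

lemma psi_tail (lam : ℝ) (i : ℕ) : psi lam i = ∑' j, phi lam (j + (i + 1)) := by
  have := Summable.sum_add_tsum_nat_add (i + 1) (summable_phi lam)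
  unfold psi
  rw [← tsum_phi lam]
  linarith [this]

lemma psi_nonneg {lam : ℝ} (hl : 0 ≤ lam) (i : ℕ) : 0 ≤ psi lam i := by
  rw [psi_tail]
  exact tsum_nonneg fun j => phi_nonneg hl _

lemma psi_succ (lam : ℝ) (i : ℕ) : psi lam (i + 1) = psi lam i - phi lam (i + 1) := by
  unfold psi
  rw [Finset.sum_range_succ]
  ring

lemma phi_succ_mul (lam : ℝ) (i : ℕ) : ((i : ℝ) + 1) * phi lam (i + 1) = lam * phi lam i := by
  unfold phi
  have h : (Nat.factorial (i + 1) : ℝ) = ((i : ℝ) + 1) * (Nat.factorial i : ℝ) := by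
    push_cast [Nat.factorial_succ]; ring
  have h2 : (Nat.factorial i : ℝ) ≠ 0 := Nat.cast_ne_zero.2 (Nat.factorial_ne_zero i)
  have h3 : ((i : ℝ) + 1) ≠ 0 := by positivity
  field_simp [h]
  rw [h]; ring


lemma summable_phi_add (lam : ℝ) (k : ℕ) : Summable (fun j => phi lam (j + k)) :=
  (summable_nat_add_iff k).2 (summable_phi lam)

lemma psi_mul_le {lam : ℝ} (hl : 0 ≤ lam) (N : ℕ) :
    ((N : ℝ) + 1) * psi lam (N + 1) ≤ lam * psi lam N := by
  rw [psi_tail, psi_tail, ← tsum_mul_left, ← tsum_mul_left]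
  apply Summable.tsum_le_tsum _ ((summable_phi_add lam _).mul_left _) ((summable_phi_add lam _).mul_left _)
  intro j
  have h1 : ((N : ℝ) + 1) * phi lam (j + (N + 1 + 1)) ≤ ((j : ℝ) + (N + 1) + 1) * phi lam (j + (N + 1) + 1) := by
    have : (j + (N + 1 + 1)) = (j + (N + 1)) + 1 := by ring
    rw [this]
    apply mul_le_mul_of_nonneg_right _ (phi_nonneg hl _)
    push_cast; linarith
  have h2 : ((j : ℝ) + (N + 1) + 1) * phi lam (j + (N + 1) + 1) = lam * phi lam (j + (N + 1)) := by
    have := phi_succ_mul lam (j + (N + 1))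
    push_cast at this ⊢
    linarith
  calc ((N : ℝ) + 1) * phi lam (j + (N + 1 + 1)) ≤ _ := h1
    _ = lam * phi lam (j + (N + 1)) := h2

lemma sum_psi_eq (lam : ℝ) (N : ℕ) :
    ∑ i ∈ Finset.range (N + 1), psi lam i
      = lam * (1 - psi lam N) + ((N : ℝ) + 1) * psi lam (N + 1) := by
  induction N with
  | zero =>
    have h1 := psi_succ lam 0
    have h2 : phi lam 1 = lam * phi lam 0 := by
      have := phi_succ_mul lam 0
      push_cast at this; linarith
    have h3 : psi lam 0 = 1 - phi lam 0 := by
      unfold psi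
      rw [Finset.sum_range_one]
    norm_num [Finset.sum_range_one] at h1 h2 h3 ⊢
    linear_combination -h1 + lam * h3 + h2
  | succ n ih =>
    rw [Finset.sum_range_succ, ih]
    have h1 := psi_succ lam (n + 1)
    have h2 : ((n : ℝ) + 1 + 1) * phi lam (n + 1 + 1) = lam * phi lam (n + 1) := by
      have := phi_succ_mul lam (n + 1)
      push_cast at this ⊢; linarith
    have h3 := psi_succ lam n
    push_cast at h1 h2 h3 ⊢
    linear_combination lam * h3 - ((n:ℝ)+2) * h1 + h2

lemma sum_psi_le {lam : ℝ} (hl : 0 ≤ lam) (N : ℕ) :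
    ∑ i ∈ Finset.range N, psi lam i ≤ lam := by
  cases N with
  | zero => rw [Finset.sum_range_zero]; exact hl
  | succ n =>
    rw [sum_psi_eq]
    have h1 := psi_mul_le hl n
    have h2 := psi_nonneg hl n
    nlinarith

lemma summable_psi {lam : ℝ} (hl : 0 ≤ lam) : Summable (psi lam) :=
  summable_of_sum_range_le (psi_nonneg hl) (sum_psi_le hl)

lemma tsum_psi_le {lam : ℝ} (hl : 0 ≤ lam) : ∑' i, psi lam i ≤ lam :=
  Real.tsum_le_of_sum_range_le (psi_nonneg hl) (sum_psi_le hl)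

lemma summable_psi_add {lam : ℝ} (hl : 0 ≤ lam) (k : ℕ) : Summable (fun j => psi lam (j + k)) :=
  (summable_nat_add_iff k).2 (summable_psi hl)

lemma tsum_phi_add (lam : ℝ) (k : ℕ) : ∑' j, phi lam (j + (k + 1)) = psi lam k :=
  (psi_tail lam k).symm

lemma tsum_psi_add_le {lam : ℝ} (hl : 0 ≤ lam) (k : ℕ) :
    ∑' j, psi lam (j + (k + 1)) ≤ lam - ∑ i ∈ Finset.range (k + 1), psi lam i := by
  have := Summable.sum_add_tsum_nat_add (k + 1) (summable_psi hl)
  have h2 := tsum_psi_le hl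
  linarith


section MDPLemmas

variable {S A : Type} [Fintype S] [Fintype A] [DecidableEq S] [DecidableEq A]
variable {P : S → A → S → ℝ}

lemma le_maxOf [Nonempty S] (g : S → ℝ) (s : S) : g s ≤ maxOf g :=
  Finset.le_sup' g (Finset.mem_univ s)

lemma maxOf_nonneg [Nonempty S] {g : S → ℝ} (hg : ∀ s, 0 ≤ g s) : 0 ≤ maxOf g :=
  le_trans (hg (Classical.arbitrary S)) (le_maxOf g _)

lemma dot_nonneg {p g : S → ℝ} (hp : ∀ s, 0 ≤ p s) (hg : ∀ s, 0 ≤ g s) :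
    0 ≤ ∑ s, p s * g s :=
  Finset.sum_nonneg fun s _ => mul_nonneg (hp s) (hg s)

lemma dot_le_maxOf [Nonempty S] {p : S → ℝ} (g : S → ℝ) (hp : ∀ s, 0 ≤ p s)
    (h1 : ∑ s, p s = 1) : ∑ s, p s * g s ≤ maxOf g := by
  calc ∑ s, p s * g s ≤ ∑ s, p s * maxOf g :=
        Finset.sum_le_sum fun s _ => mul_le_mul_of_nonneg_left (le_maxOf g s) (hp s)
    _ = maxOf g := by rw [← Finset.sum_mul, h1, one_mul]

lemma maxOf_le [Nonempty S] {g : S → ℝ} {x : ℝ} (h : ∀ s, g s ≤ x) : maxOf g ≤ x :=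
  Finset.sup'_le _ _ fun s _ => h s

lemma crProb_nonneg (hP : IsDTMDP P) {sch : S → ℕ → A → ℝ} (hs : IsCR P sch)
    (s0 : S) : ∀ n s, 0 ≤ crProb P sch s0 n s := by
  intro n
  induction n with
  | zero => intro s; unfold crProb; split <;> norm_num
  | succ n ih =>
    intro s'
    show 0 ≤ ∑ s, crProb P sch s0 n s * ∑ a, sch s n a * P s a s'
    apply Finset.sum_nonneg; intro s _
    apply mul_nonneg (ih s)
    exact Finset.sum_nonneg fun a _ => mul_nonneg (hs.1 s n a) (hP.1 s a s')

lemma row_sum (hP : IsDTMDP P) {sch : S → ℕ → A → ℝ} (hs : IsCR P sch) (s : S) (n : ℕ) :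
    ∑ a, sch s n a * ∑ s', P s a s' = 1 := by
  rw [← hs.2.1 s n]
  apply Finset.sum_congr rfl
  intro a _
  rcases eq_or_lt_of_le (hs.1 s n a) with h | h
  · rw [← h]; ring
  · rw [hs.2.2 s n a h, mul_one]

lemma crProb_sum (hP : IsDTMDP P) {sch : S → ℕ → A → ℝ} (hs : IsCR P sch) (s0 : S) :
    ∀ n, ∑ s, crProb P sch s0 n s = 1 := by
  intro n
  induction n with
  | zero => simp [crProb]
  | succ n ih =>
    show ∑ s', ∑ s, crProb P sch s0 n s * ∑ a, sch s n a * P s a s' = 1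
    rw [Finset.sum_comm]
    calc ∑ s, ∑ s', crProb P sch s0 n s * ∑ a, sch s n a * P s a s'
        = ∑ s, crProb P sch s0 n s * ∑ a, sch s n a * ∑ s', P s a s' := by
          apply Finset.sum_congr rfl; intro s _
          rw [← Finset.mul_sum, Finset.sum_comm]
          congr 1
          exact Finset.sum_congr rfl fun a _ => (Finset.mul_sum _ _ _).symm
      _ = 1 := by simp_rw [row_sum hP hs, mul_one, ih]

lemma sum_swap_helper (p : S → ℝ) (w : S → A → ℝ) (v : S → ℝ) :
    ∑ s, p s * ∑ a, w s a * ∑ s', P s a s' * v s'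
      = ∑ s', (∑ s, p s * ∑ a, w s a * P s a s') * v s' := by
  calc ∑ s, p s * ∑ a, w s a * ∑ s', P s a s' * v s'
      = ∑ s, ∑ a, ∑ s', p s * (w s a * (P s a s' * v s')) := by
        simp_rw [Finset.mul_sum]
    _ = ∑ s, ∑ s', ∑ a, p s * (w s a * (P s a s' * v s')) :=
        Finset.sum_congr rfl fun s _ => Finset.sum_comm
    _ = ∑ s', ∑ s, ∑ a, p s * (w s a * (P s a s' * v s')) := Finset.sum_comm
    _ = ∑ s', (∑ s, p s * ∑ a, w s a * P s a s') * v s' := by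
        apply Finset.sum_congr rfl; intro s' _
        rw [Finset.sum_mul]
        apply Finset.sum_congr rfl; intro s _
        rw [Finset.mul_sum, Finset.sum_mul]
        apply Finset.sum_congr rfl; intro a _
        ring

lemma crVI_partial (hP : IsDTMDP P) {sch : S → ℕ → A → ℝ} (hs : IsCR P sch)
    (q t : ℝ) (c f : S → ℝ) (s0 : S) (k : ℕ) :
    ∀ j, j ≤ k + 1 →
      ∑ s, crProb P sch s0 (k + 1 - j) s * crVI P sch q t c f k j s
        = ∑ i ∈ Finset.Ico (k + 1 - j) (k + 1),
            (phi (q * t) i * ∑ s, crProb P sch s0 i s * f s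
              + psi (q * t) i * ∑ s, crProb P sch s0 i s * (c s / q)) := by
  intro j
  induction j with
  | zero => intro _; simp [crVI]
  | succ j ih =>
    intro hj
    have hjk : j ≤ k := by omega
    have h1 : k + 1 - (j + 1) = k - j := by omega
    have h2 : k + 1 - j = (k - j) + 1 := by omega
    rw [h1]
    show ∑ s, crProb P sch s0 (k - j) s *
        ((∑ a, sch s (k - j) a * ∑ s', P s a s' * crVI P sch q t c f k j s')
          + phi (q * t) (k - j) * f s + psi (q * t) (k - j) * (c s / q)) = _
    have expand : ∑ s, crProb P sch s0 (k - j) s *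
        ((∑ a, sch s (k - j) a * ∑ s', P s a s' * crVI P sch q t c f k j s')
          + phi (q * t) (k - j) * f s + psi (q * t) (k - j) * (c s / q))
        = (∑ s', crProb P sch s0 (k - j + 1) s' * crVI P sch q t c f k j s')
          + (phi (q * t) (k - j) * ∑ s, crProb P sch s0 (k - j) s * f s
            + psi (q * t) (k - j) * ∑ s, crProb P sch s0 (k - j) s * (c s / q)) := by
      simp_rw [mul_add, Finset.sum_add_distrib]
      have e1 : ∑ s, crProb P sch s0 (k - j) s *
          ∑ a, sch s (k - j) a * ∑ s', P s a s' * crVI P sch q t c f k j s'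
          = ∑ s', crProb P sch s0 (k - j + 1) s' * crVI P sch q t c f k j s' := by
        rw [sum_swap_helper]
        apply Finset.sum_congr rfl; intro s' _
        rfl
      have e2 : ∑ s, crProb P sch s0 (k - j) s * (phi (q * t) (k - j) * f s)
          = phi (q * t) (k - j) * ∑ s, crProb P sch s0 (k - j) s * f s := by
        rw [Finset.mul_sum]; exact Finset.sum_congr rfl fun s _ => by ring
      have e3 : ∑ s, crProb P sch s0 (k - j) s * (psi (q * t) (k - j) * (c s / q))
          = psi (q * t) (k - j) * ∑ s, crProb P sch s0 (k - j) s * (c s / q) := by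
        rw [Finset.mul_sum]; exact Finset.sum_congr rfl fun s _ => by ring
      rw [e1, e2, e3]; ring
    rw [expand, ← h2, ih (by omega)]
    have hins : Finset.Ico (k - j) (k + 1) = insert (k - j) (Finset.Ico (k + 1 - j) (k + 1)) := by
      rw [h2]
      rw [Finset.insert_Ico_add_one_left_eq_Ico (by omega)]
    rw [hins, Finset.sum_insert (by simp [h2])]
    ring

lemma crVI_le_maxVI (hP : IsDTMDP P) {sch : S → ℕ → A → ℝ} (hs : IsCR P sch)
    (q t : ℝ) (c f : S → ℝ) (k : ℕ) :
    ∀ j s, crVI P sch q t c f k j s ≤ maxVI P q t c f k j s := by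
  intro j
  induction j with
  | zero => intro s; exact le_refl 0
  | succ j ih =>
    intro s
    show (∑ a, sch s (k - j) a * ∑ s', P s a s' * crVI P sch q t c f k j s') + _ + _ ≤ _ + _ + _
    have hfin : Set.Finite {x : ℝ | ∃ a, Enabled P s a ∧
        x = ∑ s', P s a s' * maxVI P q t c f k j s'} := by
      apply (Set.finite_range (fun a => ∑ s', P s a s' * maxVI P q t c f k j s')).subset
      rintro x ⟨a, _, hx⟩
      exact ⟨a, hx.symm⟩
    have hbdd := hfin.bddAbove
    apply add_le_add_left
    apply add_le_add_left
    calc ∑ a, sch s (k - j) a * ∑ s', P s a s' * crVI P sch q t c f k j s'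
        ≤ ∑ a, sch s (k - j) a * sSup {x : ℝ | ∃ a, Enabled P s a ∧
            x = ∑ s', P s a s' * maxVI P q t c f k j s'} := by
          apply Finset.sum_le_sum
          intro a _
          rcases eq_or_lt_of_le (hs.1 s (k - j) a) with h | h
          · rw [← h, zero_mul, zero_mul]
          · apply mul_le_mul_of_nonneg_left _ (le_of_lt h)
            calc ∑ s', P s a s' * crVI P sch q t c f k j s'
                ≤ ∑ s', P s a s' * maxVI P q t c f k j s' :=
                  Finset.sum_le_sum fun s' _ =>
                    mul_le_mul_of_nonneg_left (ih s') (hP.1 s a s')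
              _ ≤ _ := le_csSup hbdd ⟨a, hs.2.2 s (k - j) a h, rfl⟩
      _ = _ := by rw [← Finset.sum_mul, hs.2.1, one_mul]

lemma exists_max_sch (hP : IsDTMDP P) (q t : ℝ) (c f : S → ℝ) (k : ℕ) :
    ∃ sch : S → ℕ → A → ℝ, IsCR P sch ∧
      ∀ j, j ≤ k + 1 → ∀ s, crVI P sch q t c f k j s = maxVI P q t c f k j s := by
  have hch : ∀ s j, ∃ a, Enabled P s a ∧
      sSup {x : ℝ | ∃ a, Enabled P s a ∧ x = ∑ s', P s a s' * maxVI P q t c f k j s'}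
        = ∑ s', P s a s' * maxVI P q t c f k j s' := by
    intro s j
    have hfin : Set.Finite {x : ℝ | ∃ a, Enabled P s a ∧
        x = ∑ s', P s a s' * maxVI P q t c f k j s'} := by
      apply (Set.finite_range (fun a => ∑ s', P s a s' * maxVI P q t c f k j s')).subset
      rintro x ⟨a, _, hx⟩
      exact ⟨a, hx.symm⟩
    have hne : Set.Nonempty {x : ℝ | ∃ a, Enabled P s a ∧
        x = ∑ s', P s a s' * maxVI P q t c f k j s'} := by
      obtain ⟨a, ha⟩ := hP.2.2 s
      exact ⟨_, a, ha, rfl⟩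
    obtain ⟨a, ha, hx⟩ := hne.csSup_mem hfin
    exact ⟨a, ha, hx⟩
  choose g hg1 hg2 using hch
  refine ⟨fun s n a => if a = g s (k - n) then 1 else 0, ⟨?_, ?_, ?_⟩, ?_⟩
  · intro s n a; dsimp only; split <;> norm_num
  · intro s n; simp
  · intro s n a h
    dsimp only at h
    by_cases hcase : a = g s (k - n)
    · rw [hcase]; exact hg1 s (k - n)
    · simp [hcase] at h
  · intro j
    induction j with
    | zero => intro _ s; rfl
    | succ j ih =>
      intro hj s
      have hjk : j ≤ k := by omega
      have hkk : k - (k - j) = j := by omega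
      show (∑ a, (if a = g s (k - (k - j)) then (1:ℝ) else 0) *
          ∑ s', P s a s' * crVI _ _ q t c f k j s') + _ + _ = _
      rw [hkk]
      have hsum : ∑ a, (if a = g s j then (1:ℝ) else 0) *
          (∑ s', P s a s' * crVI P (fun s n a => if a = g s (k - n) then (1:ℝ) else 0) q t c f k j s')
          = ∑ s', P s (g s j) s' * crVI P (fun s n a => if a = g s (k - n) then (1:ℝ) else 0) q t c f k j s' := by
        rw [Finset.sum_eq_single (g s j)]
        · rw [if_pos rfl, one_mul]
        · intro b _ hb; rw [if_neg hb, zero_mul]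
        · intro h; exact absurd (Finset.mem_univ _) h
      rw [hsum]
      have hcr : ∀ s', crVI P (fun s n a => if a = g s (k - n) then (1:ℝ) else 0) q t c f k j s'
          = maxVI P q t c f k j s' := ih (by omega)
      simp_rw [hcr]
      rw [← hg2 s j]
      rfl

end MDPLemmas

set_option maxHeartbeats 2000000 in
/-- for an ε-sufficient `k`, the maximising value-iteration vector
`q'_0` is within `ε` of the supremum of the value over CR schedulers. -/
theorem stmt12 {S A : Type} [Fintype S] [Nonempty S] [Fintype A]
    [DecidableEq S] [DecidableEq A]
    (P : S → A → S → ℝ) (hP : IsDTMDP P)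
    (q t : ℝ) (hq : 0 < q) (ht : 0 ≤ t)
    (c f : S → ℝ) (hc : ∀ s, 0 ≤ c s) (hf : ∀ s, 0 ≤ f s)
    (ε : ℝ) (hε : 0 < ε) (k : ℕ) (hk : EpsSufficient q t c f ε k) :
    ∀ s0 : S,
      |maxVI P q t c f k (k + 1) s0 -
        ⨆ sch : {sch : S → ℕ → A → ℝ // IsCR P sch},
          value q t c f (crProb P sch.1 s0)| < ε := by
  intro s0
  have hl : 0 ≤ q * t := mul_nonneg hq.le ht
  have hMf : 0 ≤ maxOf f := maxOf_nonneg hf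
  have hMc : 0 ≤ maxOf c := maxOf_nonneg hc
  have hSle : ∑ n ∈ Finset.range (k + 1), psi (q * t) n ≤ q * t := sum_psi_le hl (k + 1)
  set D : ℝ := psi (q * t) k * maxOf f
      + (q * t - ∑ n ∈ Finset.range (k + 1), psi (q * t) n) * (maxOf c / q) with hDdef
  have hDε : D < ε := by
    have h2 : psi (q * t) k * maxOf f < ε / 2 := hk.2
    have h3 : (q * t - ∑ n ∈ Finset.range (k + 1), psi (q * t) n) * (maxOf c / q) < ε / 2 := by
      rcases eq_or_lt_of_le hMc with h | h
      · rw [← h]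
        simp only [zero_div, mul_zero]
        positivity
      · rcases hk.1 with h0 | h0
        · exact absurd h0 (ne_of_gt h)
        · have hlt : q * t - ∑ n ∈ Finset.range (k + 1), psi (q * t) n
              < ε * q / (2 * maxOf c) := by linarith
          calc (q * t - ∑ n ∈ Finset.range (k + 1), psi (q * t) n) * (maxOf c / q)
              < (ε * q / (2 * maxOf c)) * (maxOf c / q) :=
                mul_lt_mul_of_pos_right hlt (by positivity)
            _ = ε / 2 := by field_simp
    rw [hDdef]; linarith
  have key : ∀ sch : S → ℕ → A → ℝ, IsCR P sch →
      crVI P sch q t c f k (k + 1) s0 ≤ value q t c f (crProb P sch s0) ∧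
      value q t c f (crProb P sch s0) ≤ crVI P sch q t c f k (k + 1) s0 + D := by
    intro sch hs
    have hpnn := crProb_nonneg hP hs s0
    have hps := crProb_sum hP hs s0
    set G : ℕ → ℝ := fun i => phi (q * t) i * ∑ s, crProb P sch s0 i s * f s
        + psi (q * t) i * ∑ s, crProb P sch s0 i s * (c s / q) with hGdef
    have hF1 : ∀ i, 0 ≤ ∑ s, crProb P sch s0 i s * f s := fun i => dot_nonneg (hpnn i) hf
    have hF2 : ∀ i, ∑ s, crProb P sch s0 i s * f s ≤ maxOf f :=
      fun i => dot_le_maxOf f (hpnn i) (hps i)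
    have hC1 : ∀ i, 0 ≤ ∑ s, crProb P sch s0 i s * (c s / q) :=
      fun i => dot_nonneg (hpnn i) fun s => div_nonneg (hc s) hq.le
    have hC2 : ∀ i, ∑ s, crProb P sch s0 i s * (c s / q) ≤ maxOf c / q := by
      intro i
      calc ∑ s, crProb P sch s0 i s * (c s / q)
          ≤ maxOf (fun s => c s / q) := dot_le_maxOf _ (hpnn i) (hps i)
        _ ≤ maxOf c / q := maxOf_le fun s => by
              gcongr
              exact le_maxOf c s
    have hGnn : ∀ i, 0 ≤ G i := fun i =>
      add_nonneg (mul_nonneg (phi_nonneg hl i) (hF1 i))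
        (mul_nonneg (psi_nonneg hl i) (hC1 i))
    have hGle : ∀ i, G i ≤ phi (q * t) i * maxOf f + psi (q * t) i * (maxOf c / q) := fun i =>
      add_le_add (mul_le_mul_of_nonneg_left (hF2 i) (phi_nonneg hl i))
        (mul_le_mul_of_nonneg_left (hC2 i) (psi_nonneg hl i))
    have hsum2 : Summable (fun i => phi (q * t) i * maxOf f + psi (q * t) i * (maxOf c / q)) :=
      ((summable_phi _).mul_right _).add ((summable_psi hl).mul_right _)
    have hGsum : Summable G := Summable.of_nonneg_of_le hGnn hGle hsum2
    have hval : value q t c f (crProb P sch s0) = ∑' i, G i := rfl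
    have hsplit := Summable.sum_add_tsum_nat_add (k + 1) hGsum
    have hpartial : ∑ i ∈ Finset.range (k + 1), G i = crVI P sch q t c f k (k + 1) s0 := by
      have h := crVI_partial hP hs q t c f s0 k (k + 1) le_rfl
      rw [Nat.sub_self] at h
      have hL : ∑ s, crProb P sch s0 0 s * crVI P sch q t c f k (k + 1) s
          = crVI P sch q t c f k (k + 1) s0 := by
        have hcr0 : ∀ s, crProb P sch s0 0 s = if s = s0 then 1 else 0 := fun s => rfl
        simp_rw [hcr0, ite_mul, one_mul, zero_mul]
        rw [Finset.sum_ite_eq' Finset.univ s0]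
        exact if_pos (Finset.mem_univ s0)
      rw [hL] at h
      rw [Finset.range_eq_Ico, ← h]
    have htail_nn : 0 ≤ ∑' i, G (i + (k + 1)) :=
      tsum_nonneg fun i => hGnn _
    have htail_le : ∑' i, G (i + (k + 1)) ≤ D := by
      have hs1 : Summable fun i => G (i + (k + 1)) := (summable_nat_add_iff (k + 1)).2 hGsum
      have hsφ : Summable fun i => phi (q * t) (i + (k + 1)) * maxOf f :=
        (summable_nat_add_iff (k + 1)).2 ((summable_phi _).mul_right _)
      have hsψ : Summable fun i => psi (q * t) (i + (k + 1)) * (maxOf c / q) :=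
        (summable_nat_add_iff (k + 1)).2 ((summable_psi hl).mul_right _)
      calc ∑' i, G (i + (k + 1))
          ≤ ∑' i, (phi (q * t) (i + (k + 1)) * maxOf f
              + psi (q * t) (i + (k + 1)) * (maxOf c / q)) :=
            Summable.tsum_le_tsum (fun i => hGle _) hs1 (hsφ.add hsψ)
        _ = (∑' i, phi (q * t) (i + (k + 1))) * maxOf f
              + (∑' i, psi (q * t) (i + (k + 1))) * (maxOf c / q) := by
            rw [Summable.tsum_add hsφ hsψ, tsum_mul_right, tsum_mul_right]
        _ ≤ psi (q * t) k * maxOf f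
              + (q * t - ∑ n ∈ Finset.range (k + 1), psi (q * t) n) * (maxOf c / q) := by
            rw [tsum_phi_add]
            apply add_le_add_right
            exact mul_le_mul_of_nonneg_right (tsum_psi_add_le hl k) (by positivity)
        _ = D := rfl
    constructor
    · rw [hval, ← hsplit, hpartial]
      linarith
    · rw [hval, ← hsplit, hpartial]
      linarith
  obtain ⟨schm, hschm, heqm⟩ := exists_max_sch hP q t c f k
  have hne : Nonempty {sch : S → ℕ → A → ℝ // IsCR P sch} := ⟨⟨schm, hschm⟩⟩
  have hub : ∀ w : {sch : S → ℕ → A → ℝ // IsCR P sch},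
      value q t c f (crProb P w.1 s0) ≤ maxVI P q t c f k (k + 1) s0 + D := by
    rintro ⟨sch, hs⟩
    have h1 := (key sch hs).2
    have h2 : crVI P sch q t c f k (k + 1) s0 ≤ maxVI P q t c f k (k + 1) s0 :=
      crVI_le_maxVI hP hs q t c f k (k + 1) s0
    simpa using h1.trans (by linarith)
  have hbdd : BddAbove (Set.range fun w : {sch : S → ℕ → A → ℝ // IsCR P sch} =>
      value q t c f (crProb P w.1 s0)) := by
    refine ⟨maxVI P q t c f k (k + 1) s0 + D, ?_⟩
    rintro x ⟨w, rfl⟩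
    exact hub w
  have hsup_le : (⨆ w : {sch : S → ℕ → A → ℝ // IsCR P sch},
      value q t c f (crProb P w.1 s0)) ≤ maxVI P q t c f k (k + 1) s0 + D :=
    ciSup_le hub
  have hM_le : maxVI P q t c f k (k + 1) s0 ≤
      ⨆ w : {sch : S → ℕ → A → ℝ // IsCR P sch}, value q t c f (crProb P w.1 s0) := by
    have h1 : crVI P schm q t c f k (k + 1) s0 = maxVI P q t c f k (k + 1) s0 :=
      heqm (k + 1) le_rfl s0
    have h2 := (key schm hschm).1
    have h3 := le_ciSup hbdd (⟨schm, hschm⟩ : {sch : S → ℕ → A → ℝ // IsCR P sch})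
    simp only at h3
    linarith
  rw [abs_sub_lt_iff]
  constructor
  · linarith
  · linarith

end TR
end
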